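/- With σ : F → F' an isomorphism, f ∈ F[x], K and K' splitting fields of f and σ(f): for any root α ∈ K of f and any root α' ∈ K' of σ(min(α, F, x)), there exists an isomorphism τ : K → K' extending σ with τ(α) = α'. -/

import Mathlib

open Polynomial

/-- With `σ : F → F'` a field isomorphism, `f ∈ F[x]`, and `K`, `K'` splitting fields of
`f` and `σ(f)`: for any root `α ∈ K` of `f` and any root `α' ∈ K'` of
`σ(min(α, F, x))`, there exists an isomorphism `τ : K → K'` extending `σ` with
`τ(α) = α'`. -/
theorem isomorphism_extension_theorem_root {F F' : Type*} [Field F] [Field F']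
    (σ : F ≃+* F') (f : Polynomial F)
    (K K' : Type*) [Field K] [Field K'] [Algebra F K] [Algebra F' K']
    [IsSplittingField F K f] [IsSplittingField F' K' (f.map (σ : F →+* F'))]
    (α : K) (hα : Polynomial.aeval α f = 0)
    (α' : K') (hα' : Polynomial.aeval α' ((minpoly F α).map (σ : F →+* F')) = 0) :
    ∃ τ : K ≃+* K',
      (∀ a : F, τ (algebraMap F K a) = algebraMap F' K' (σ a)) ∧ τ α = α' := by
  letI : Algebra F K' := ((algebraMap F' K').comp (σ : F →+* F')).toAlgebra
  have halg : (algebraMap F K') = (algebraMap F' K').comp (σ : F →+* F') := rfl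
  have hrange : Set.range (algebraMap F K') = Set.range (algebraMap F' K') := by
    rw [halg]
    ext x
    constructor
    · rintro ⟨a, rfl⟩; exact ⟨σ a, rfl⟩
    · rintro ⟨a, rfl⟩; exact ⟨σ.symm a, by simp⟩
  have hmapf : f.map (algebraMap F K') = (f.map (σ : F →+* F')).map (algebraMap F' K') := by
    rw [halg, Polynomial.map_map]
  haveI : IsSplittingField F K' f := by
    constructor
    · rw [hmapf]
      exact IsSplittingField.splits K' (f.map (σ : F →+* F'))
    · have h2 := IsSplittingField.adjoin_rootSet K' (f.map (σ : F →+* F'))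
      have hset : f.rootSet K' = (f.map (σ : F →+* F')).rootSet K' := by
        unfold Polynomial.rootSet Polynomial.aroots
        rw [hmapf]
      rw [eq_top_iff]
      intro x _
      rw [Algebra.mem_adjoin_iff, hrange, hset]
      have := h2 ▸ Algebra.mem_top (R := F') (A := K') (x := x)
      rwa [Algebra.mem_adjoin_iff] at this
  haveI : FiniteDimensional F K := IsSplittingField.finiteDimensional K f
  haveI : Normal F K' := Normal.of_isSplittingField f
  have hint : IsIntegral F α := IsIntegral.of_finite F α
  let e : K ≃ₐ[F] K' :=
    (IsSplittingField.algEquiv K f).trans (IsSplittingField.algEquiv K' f).symm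
  have hroot : Polynomial.aeval α' (minpoly F α) = 0 := by
    rw [Polynomial.aeval_def, halg, ← Polynomial.eval₂_map]
    exact hα'
  have hm : minpoly F α' = minpoly F (e α) := by
    rw [minpoly.algEquiv_eq e α]
    exact minpoly.eq_of_irreducible_of_monic (p := minpoly F α)
      (minpoly.irreducible hint) hroot (minpoly.monic hint) |>.symm
  obtain ⟨g, hg⟩ := (Normal.minpoly_eq_iff_mem_orbit (F := F) (E := K')).mp hm
  refine ⟨(e.trans g).toRingEquiv, fun a => ?_, ?_⟩
  · have : (e.trans g) (algebraMap F K a) = algebraMap F K' a := (e.trans g).commutes a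
    simp only [halg, RingHom.comp_apply] at this
    exact this
  · exact hg
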